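/- Let V be a finite-dimensional real vector space with a direct sum decomposition V = V₊ ⊕ V₋, let ω : V × V → ℝ be an alternating bilinear form vanishing on V₊ × V₊ and on V₋ × V₋, and let L : V → V be a linear map such that ω(exp(tL)x, exp(tL)y) = ω(x,y) for all t ∈ ℝ and x,y ∈ V (exp denotes the exponential of endomorphisms). Define a multiplication on G := ℝ × V × ℝ by (z,x,t)·(z',x',t') := (z + z' + ½·ω(exp(−t'L)x, x'), exp(−t'L)x + x', t + t'). Then: (1) this multiplication makes G a group (the semidirect product of the Heisenberg group H(ω) by ℝ); (2) G₊ := {0} × V₊ × {0} is a subgroup of G; (3) the map ℝ × V₋ × ℝ → G/G₊ sending (v,x,u) to the left coset (v,x,u)·G₊ is a bijection. -/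

import Mathlib

set_option maxHeartbeats 1000000
set_option synthInstance.maxHeartbeats 200000


/-- For a finite-dimensional real vector space `V = V₊ ⊕ V₋`, an alternating
bilinear form `ω` vanishing on `V₊ × V₊` and `V₋ × V₋`, and `L` with `exp(tL)` preserving
`ω`, the multiplication
`(z,x,t)·(z',x',t') = (z + z' + ½ ω(exp(−t'L)x, x'), exp(−t'L)x + x', t + t')`
makes `ℝ × V × ℝ` a group, `{0} × V₊ × {0}` is a subgroup `G₊`, and
`(v,x,u) ↦ (v,x,u)·G₊` is a bijection from `ℝ × V₋ × ℝ` onto the set of left cosets. -/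
theorem stmt2 {V : Type*} [NormedAddCommGroup V] [NormedSpace ℝ V] [FiniteDimensional ℝ V]
    (Vp Vm : Submodule ℝ V) (hcompl : IsCompl Vp Vm)
    (ω : V →ₗ[ℝ] V →ₗ[ℝ] ℝ) (halt : ∀ x : V, ω x x = 0)
    (hpp : ∀ x ∈ Vp, ∀ y ∈ Vp, ω x y = 0) (hmm : ∀ x ∈ Vm, ∀ y ∈ Vm, ω x y = 0)
    (L : V →L[ℝ] V)
    (hinv : ∀ (t : ℝ) (x y : V),
      ω (NormedSpace.exp (t • L) x) (NormedSpace.exp (t • L) y) = ω x y)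
    (mul : (ℝ × V × ℝ) → (ℝ × V × ℝ) → (ℝ × V × ℝ))
    (hmul : ∀ a b : ℝ × V × ℝ, mul a b =
      (a.1 + b.1 + (1 / 2) * ω (NormedSpace.exp ((-b.2.2) • L) a.2.1) b.2.1,
       NormedSpace.exp ((-b.2.2) • L) a.2.1 + b.2.1,
       a.2.2 + b.2.2))
    (Gp : Set (ℝ × V × ℝ)) (hGp : Gp = {g : ℝ × V × ℝ | g.1 = 0 ∧ g.2.1 ∈ Vp ∧ g.2.2 = 0}) :
    -- (1) the multiplication makes `ℝ × V × ℝ` a group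
    ((∀ a b c, mul (mul a b) c = mul a (mul b c)) ∧
     (∀ a, mul (0, 0, 0) a = a ∧ mul a (0, 0, 0) = a) ∧
     (∀ a, ∃ b, mul a b = (0, 0, 0) ∧ mul b a = (0, 0, 0))) ∧
    -- (2) `G₊ = {0} × V₊ × {0}` is a subgroup
    (((0 : ℝ), (0 : V), (0 : ℝ)) ∈ Gp ∧
     (∀ a ∈ Gp, ∀ b ∈ Gp, mul a b ∈ Gp) ∧
     (∀ a ∈ Gp, ∃ b ∈ Gp, mul a b = (0, 0, 0) ∧ mul b a = (0, 0, 0))) ∧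
    -- (3) `(v,x,u) ↦ (v,x,u)·G₊` is a bijection from `ℝ × V₋ × ℝ` onto `G/G₊`
    ((∀ p q : ℝ × ↥Vm × ℝ,
        {y | ∃ h ∈ Gp, y = mul (p.1, (p.2.1 : V), p.2.2) h} =
          {y | ∃ h ∈ Gp, y = mul (q.1, (q.2.1 : V), q.2.2) h} → p = q) ∧
     (∀ g : ℝ × V × ℝ, ∃ p : ℝ × ↥Vm × ℝ,
        {y | ∃ h ∈ Gp, y = mul (p.1, (p.2.1 : V), p.2.2) h} =
          {y | ∃ h ∈ Gp, y = mul g h})) := by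
  have hE0 : ∀ x : V, NormedSpace.exp ((0:ℝ) • L) x = x := by
    intro x
    rw [zero_smul, NormedSpace.exp_zero, ContinuousLinearMap.one_apply]
  have hEadd : ∀ (s t : ℝ) (x : V), NormedSpace.exp ((s + t) • L) x
      = NormedSpace.exp (s • L) (NormedSpace.exp (t • L) x) := by
    intro s t x
    have hcomm : Commute (s • L) (t • L) := by
      unfold Commute SemiconjBy
      rw [smul_mul_assoc, mul_smul_comm, smul_mul_assoc, mul_smul_comm, smul_comm]
    rw [add_smul, NormedSpace.exp_add_of_commute_of_mem_ball (𝕂 := ℝ) hcomm ((NormedSpace.expSeries_radius_eq_top ℝ (V →L[ℝ] V)).symm ▸ edist_lt_top _ _) ((NormedSpace.expSeries_radius_eq_top ℝ (V →L[ℝ] V)).symm ▸ edist_lt_top _ _), ContinuousLinearMap.mul_apply]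
  have hEinv : ∀ (t : ℝ) (x : V),
      NormedSpace.exp ((-t) • L) (NormedSpace.exp (t • L) x) = x := by
    intro t x
    rw [← hEadd, neg_add_cancel, hE0]
  -- associativity
  have hassoc : ∀ a b c, mul (mul a b) c = mul a (mul b c) := by
    intro a b c
    obtain ⟨za, xa, ta⟩ := a
    obtain ⟨zb, xb, tb⟩ := b
    obtain ⟨zc, xc, tc⟩ := c
    simp only [hmul]
    refine Prod.ext ?_ (Prod.ext ?_ ?_)
    · have key : (ω (NormedSpace.exp ((-tb) • L) xa)) xb
          = ω (NormedSpace.exp ((-(tb + tc)) • L) xa)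
              (NormedSpace.exp ((-tc) • L) xb) := by
        rw [show (-(tb + tc) : ℝ) = -tc + -tb by ring, hEadd, ← hinv (-tc) ]
      simp only [map_add, LinearMap.add_apply]
      rw [show NormedSpace.exp ((-tc) • L) (NormedSpace.exp ((-tb) • L) xa)
          = NormedSpace.exp ((-(tb + tc)) • L) xa by
        rw [show (-(tb + tc) : ℝ) = -tc + -tb by ring, hEadd]]
      rw [key]
      ring
    · simp only [map_add]
      rw [show NormedSpace.exp ((-tc) • L) (NormedSpace.exp ((-tb) • L) xa)
          = NormedSpace.exp ((-(tb + tc)) • L) xa by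
        rw [show (-(tb + tc) : ℝ) = -tc + -tb by ring, hEadd]]
      abel
    · ring
  have hskew : ∀ x y : V, ω x y = - ω y x := by
    intro x y
    have h := halt (x + y)
    simp only [map_add, LinearMap.add_apply, halt] at h
    linarith
  -- identity
  have hone : ∀ a : ℝ × V × ℝ, mul (0, 0, 0) a = a ∧ mul a (0, 0, 0) = a := by
    intro a
    obtain ⟨z, x, t⟩ := a
    constructor
    · simp [hmul, map_zero]
    · simp [hmul, hE0, neg_zero, map_zero]
  -- inverses
  have hinvg : ∀ a : ℝ × V × ℝ, mul a (-a.1, -(NormedSpace.exp (a.2.2 • L) a.2.1), -a.2.2)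
        = (0, 0, 0) ∧
      mul (-a.1, -(NormedSpace.exp (a.2.2 • L) a.2.1), -a.2.2) a = (0, 0, 0) := by
    intro a
    obtain ⟨z, x, t⟩ := a
    constructor
    · simp only [hmul, neg_neg, hEinv]
      refine Prod.ext ?_ (Prod.ext ?_ ?_)
      · simp [map_neg, halt]
      · simp
      · simp
    · simp only [hmul]
      refine Prod.ext ?_ (Prod.ext ?_ ?_)
      · simp only [map_neg, LinearMap.neg_apply, hEinv, halt]
        ring
      · simp only [map_neg, hEinv, neg_add_cancel]
      · simp
  -- coset description
  have hcoset : ∀ g : ℝ × V × ℝ, {y | ∃ h ∈ Gp, y = mul g h}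
      = {y : ℝ × V × ℝ | ∃ p ∈ Vp, y = (g.1 + (1/2) * ω g.2.1 p, g.2.1 + p, g.2.2)} := by
    intro g
    ext y
    simp only [hGp, Set.mem_setOf_eq]
    constructor
    · rintro ⟨⟨h1, h2, h3⟩, ⟨hz, hx, ht⟩, hy⟩
      simp only at hz hx ht
      subst hz ht
      exact ⟨h2, hx, by rw [hy, hmul]; simp [hE0]⟩
    · rintro ⟨p, hp, hy⟩
      refine ⟨(0, p, 0), ⟨rfl, hp, rfl⟩, ?_⟩
      rw [hy, hmul]
      simp [hE0]
  refine ⟨⟨hassoc, hone, fun a => ⟨_, hinvg a⟩⟩, ?_, ?_, ?_⟩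
  · -- subgroup
    refine ⟨by simp [hGp], ?_, ?_⟩
    · rintro ⟨z, x, t⟩ ha ⟨z', x', t'⟩ hb
      rw [hGp] at ha hb ⊢
      obtain ⟨hz, hx, ht⟩ := ha
      obtain ⟨hz', hx', ht'⟩ := hb
      simp only at hz hx ht hz' hx' ht'
      subst hz ht hz' ht'
      rw [hmul]
      refine ⟨?_, ?_, by simp⟩
      · simp [hE0, hpp x hx x' hx']
      · simpa [hE0] using Vp.add_mem hx hx'
    · rintro ⟨z, x, t⟩ ha
      rw [hGp] at ha
      obtain ⟨hz, hx, ht⟩ := ha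
      simp only at hz hx ht
      subst hz ht
      refine ⟨(-0, -(NormedSpace.exp ((0:ℝ) • L) x), -0), ?_, hinvg (0, x, 0)⟩
      rw [hGp]
      exact ⟨by simp, by simp [hE0, Vp.neg_mem hx], by simp⟩
  · -- injective
    rintro ⟨v, x, u⟩ ⟨v', x', u'⟩ hpq
    rw [hcoset, hcoset] at hpq
    have hmem : ((v, (x:V), u) : ℝ × V × ℝ)
        ∈ {y : ℝ × V × ℝ | ∃ p ∈ Vp, y = (v + (1/2) * ω (x:V) p, (x:V) + p, u)} := by
      exact ⟨0, Vp.zero_mem, by simp⟩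
    rw [hpq] at hmem
    obtain ⟨q, hq, heq⟩ := hmem
    simp only [Prod.mk.injEq] at heq
    obtain ⟨h1, h2, h3⟩ := heq
    have hqm : q = (x:V) - (x':V) := by rw [h2]; abel
    have hq0 : q = 0 := by
      have : q ∈ Vm := hqm ▸ Vm.sub_mem x.2 x'.2
      exact (Submodule.disjoint_def.mp hcompl.disjoint.symm q this hq)
    have hxx : (x:V) = (x':V) := by
      have := hqm; rw [hq0] at this; linear_combination (norm := module) -this
    refine Prod.ext ?_ (Prod.ext (Subtype.ext hxx) h3)
    simpa [hq0, map_zero] using h1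
  · -- surjective
    rintro ⟨z, x, t⟩
    obtain ⟨a, b, ha, hb, hab⟩ := Submodule.codisjoint_iff_exists_add_eq.mp hcompl.codisjoint x
    refine ⟨(z - (1/2) * ω b a, ⟨b, hb⟩, t), ?_⟩
    rw [hcoset, hcoset]
    ext y
    simp only [Set.mem_setOf_eq]
    constructor
    · rintro ⟨q, hq, hy⟩
      refine ⟨q - a, Vp.sub_mem hq ha, ?_⟩
      rw [hy]
      have hω : ω x (q - a) = ω b q - ω b a := by
        rw [← hab]
        simp only [map_add, map_sub, LinearMap.add_apply, LinearMap.sub_apply,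
          hpp a ha q hq, hpp a ha a ha]
        ring
      refine Prod.ext ?_ (Prod.ext ?_ rfl)
      · simp only [hω]; ring
      · simp only; rw [← hab]; abel
    · rintro ⟨p, hp, hy⟩
      refine ⟨p + a, Vp.add_mem hp ha, ?_⟩
      rw [hy]
      have hω : ω x p = ω b p := by
        rw [← hab]
        simp only [map_add, LinearMap.add_apply, hpp a ha p hp]
        ring
      have hω2 : ω b (p + a) = ω b p + ω b a := by simp [map_add]
      refine Prod.ext ?_ (Prod.ext ?_ rfl)
      · simp only [hω, hω2]; ring
      · simp only; rw [← hab]; abel
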